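/- Fix a positive integer d and v ∈ I(d). For every monomial 𝔖 in ON(v) and every α ∈ 𝔖, the o-depth of α in 𝔖 is at least the depth of α in the monomial 𝔖 ∪ 𝔖^# of N(v). -/

import Mathlib

namespace OG

/-- `star d k = k* = 2d+1-k`. -/
def star (d k : ℕ) : ℕ := 2 * d + 1 - k

/-- `I(d,2d)`: the set of `d`-element subsets of `{1,…,2d}`. -/
def Idn (d : ℕ) : Set (Finset ℕ) :=
  {v | v.card = d ∧ ∀ k ∈ v, 1 ≤ k ∧ k ≤ 2 * d}

/-- The partial order on `I(d,2d)`: entrywise comparison of increasing enumerations. -/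
def leI (x y : Finset ℕ) : Prop :=
  List.Forall₂ (· ≤ ·) (x.sort (· ≤ ·)) (y.sort (· ≤ ·))

/-- `I(d)`: elements of `I(d,2d)` containing exactly one of `k`, `k*` for each `k`,
with evenly many entries exceeding `d`. -/
def Iset (d : ℕ) : Set (Finset ℕ) :=
  {v | v ∈ Idn d ∧ (∀ k, 1 ≤ k → k ≤ 2 * d → (k ∈ v ↔ star d k ∉ v)) ∧
       Even ((v.filter (fun k => d < k)).card)}

/-- membership in `N(v)`. -/
def inN (d : ℕ) (v : Finset ℕ) (p : ℕ × ℕ) : Prop :=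
  1 ≤ p.1 ∧ p.1 ≤ 2 * d ∧ 1 ≤ p.2 ∧ p.2 ≤ 2 * d ∧ p.1 ∉ v ∧ p.2 ∈ v ∧ p.2 < p.1

/-- membership in `OR(v)`. -/
def inOR (d : ℕ) (v : Finset ℕ) (p : ℕ × ℕ) : Prop :=
  1 ≤ p.1 ∧ p.1 ≤ 2 * d ∧ 1 ≤ p.2 ∧ p.2 ≤ 2 * d ∧ p.1 ∉ v ∧ p.2 ∈ v ∧ p.1 < star d p.2

/-- membership in `ON(v) = OR(v) ∩ N(v)`. -/
def inON (d : ℕ) (v : Finset ℕ) (p : ℕ × ℕ) : Prop := inN d v p ∧ inOR d v p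

/-- membership in the diagonal `D(v)`. -/
def inDiag (d : ℕ) (v : Finset ℕ) (p : ℕ × ℕ) : Prop :=
  p.1 ∉ v ∧ p.2 ∈ v ∧ p.1 = star d p.2

instance (d : ℕ) (v : Finset ℕ) : DecidablePred (inN d v) := fun p => by
  unfold inN; infer_instance

instance (d : ℕ) (v : Finset ℕ) : DecidablePred (inOR d v) := fun p => by
  unfold inOR; infer_instance

instance (d : ℕ) (v : Finset ℕ) : DecidablePred (inON d v) := fun p => by
  unfold inON; infer_instance

instance (d : ℕ) (v : Finset ℕ) : DecidablePred (inDiag d v) := fun p => by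
  unfold inDiag; infer_instance

/-- `(R,C) > (r,c)` iff `R > r` and `C < c`. -/
def pgt (A B : ℕ × ℕ) : Prop := B.1 < A.1 ∧ A.2 < B.2

instance : DecidableRel pgt := fun A B => by unfold pgt; infer_instance

/-- `(R,C)` dominates `(r,c)` iff `R ≥ r` and `C ≤ c`. -/
def pdom (A B : ℕ × ℕ) : Prop := B.1 ≤ A.1 ∧ A.2 ≤ B.2

/-- vertical projection `p_v(r,c) = (c*,c)`. -/
def pv (d : ℕ) (α : ℕ × ℕ) : ℕ × ℕ := (star d α.2, α.2)

/-- horizontal projection `p_h(r,c) = (r,r*)`. -/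
def ph (d : ℕ) (α : ℕ × ℕ) : ℕ × ℕ := (α.1, star d α.1)

/-- `(r,c)^# = (c*,r*)`. -/
def hash (d : ℕ) (α : ℕ × ℕ) : ℕ × ℕ := (star d α.2, star d α.1)

/-- A `v`-chain: a strictly decreasing (under `pgt`) list of elements of `ON(v)`. -/
def IsVChain (d : ℕ) (v : Finset ℕ) (C : List (ℕ × ℕ)) : Prop :=
  C.Chain' pgt ∧ ∀ α ∈ C, inON d v α

/-- Two consecutive elements `(r,c) > (R,C)` of a `v`-chain are connected
if `r* ≥ C` and `R > r*`. -/
def Connected (d : ℕ) (α β : ℕ × ℕ) : Prop :=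
  β.2 ≤ star d α.1 ∧ star d α.1 < β.1

instance (d : ℕ) : ∀ α β, Decidable (Connected d α β) := fun α β => by
  unfold Connected; infer_instance

/-- The connected components of a `v`-chain. -/
def components (d : ℕ) (C : List (ℕ × ℕ)) : List (List (ℕ × ℕ)) :=
  C.splitBy (fun a b => decide (Connected d a b))

/-- The three possible types of an element of a `v`-chain. -/
inductive VType | V | H | S
deriving DecidableEq

/-- The type of an element `α` of a `v`-chain `C`: type V if `α` is not the last element
of its connected component or that component has even cardinality; otherwise type H if
`p_h(α) ∈ N(v)` (i.e. `r > r*`) and type S if not. -/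
def typeOf (d : ℕ) (C : List (ℕ × ℕ)) (α : ℕ × ℕ) : VType :=
  match (components d C).find? (fun g => decide (α ∈ g)) with
  | some g =>
      if g.getLast? = some α ∧ Odd g.length then
        (if star d α.1 < α.1 then VType.H else VType.S)
      else VType.V
  | none => VType.V

/-- `𝔖_{C,α}`. -/
def SCa (d : ℕ) (C : List (ℕ × ℕ)) (α : ℕ × ℕ) : Multiset (ℕ × ℕ) :=
  match typeOf d C α with
  | VType.V => {pv d α}
  | VType.H => {pv d α, ph d α}
  | VType.S => {α, hash d α}

/-- `𝔖_C`: the multiset union of the `𝔖_{C,α}` over `α ∈ C`. -/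
def SC (d : ℕ) (C : List (ℕ × ℕ)) : Multiset (ℕ × ℕ) :=
  (C.map (fun α => SCa d C α)).sum

/-- `q_{C,α}`. -/
def qCa (d : ℕ) (C : List (ℕ × ℕ)) (α : ℕ × ℕ) : ℕ × ℕ :=
  match typeOf d C α with
  | VType.S => α
  | _ => pv d α

/-- A strictly decreasing chain of elements of the monomial `S`. -/
def IsChainIn (S : Multiset (ℕ × ℕ)) (L : List (ℕ × ℕ)) : Prop :=
  L.Chain' pgt ∧ ∀ β ∈ L, β ∈ S

/-- The depth of `α` in a monomial `S` of `N(v)`: the maximal length of a strictly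
decreasing chain of elements of `S` ending at `α`. -/
noncomputable def depth (S : Multiset (ℕ × ℕ)) (α : ℕ × ℕ) : ℕ :=
  sSup {k | ∃ L, IsChainIn S L ∧ L.getLast? = some α ∧ L.length = k}

/-- The o-depth of `α` in a `v`-chain `C`: the depth of `q_{C,α}` in `𝔖_C`. -/
noncomputable def odepthC (d : ℕ) (C : List (ℕ × ℕ)) (α : ℕ × ℕ) : ℕ :=
  depth (SC d C) (qCa d C α)

/-- The o-depth of `α` in a monomial `S` of `ON(v)`: the maximum of `odepthC` over
all `v`-chains in `S` containing `α`. -/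
noncomputable def odepthM (d : ℕ) (v : Finset ℕ) (S : Multiset (ℕ × ℕ)) (α : ℕ × ℕ) : ℕ :=
  sSup {k | ∃ C, IsVChain d v C ∧ (∀ β ∈ C, β ∈ S) ∧ α ∈ C ∧ odepthC d C α = k}

/-- A distinguished subset of `N(v)`. -/
def Distinguished (d : ℕ) (v : Finset ℕ) (S : Finset (ℕ × ℕ)) : Prop :=
  (∀ p ∈ S, inN d v p) ∧
  ∀ A ∈ S, ∀ B ∈ S, A ≠ B →
    A.1 ≠ B.1 ∧ A.2 ≠ B.2 ∧ (B.1 < A.1 → (B.1 < A.2 ∨ A.2 < B.2))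

/-- The element of `I(d,2d)` attached to a distinguished subset `S` of `N(v)`:
remove from `v` the column indices of elements of `S` and add their row indices. -/
def toW (v : Finset ℕ) (S : Finset (ℕ × ℕ)) : Finset ℕ :=
  (v \ S.image Prod.snd) ∪ S.image Prod.fst

/-- `w(C) = w_C`, the element of `I(d,2d)` attached to the `v`-chain `C` via the
distinguished subset `𝔖_C`. -/
def wC (d : ℕ) (v : Finset ℕ) (C : List (ℕ × ℕ)) : Finset ℕ :=
  toW v (SC d C).toFinset

/-- `w` ortho-dominates a monomial `S` in `ON(v)`: `w ≥ w(C)` for every `v`-chain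
`C` contained in `S`. -/
def ODominates (d : ℕ) (v w : Finset ℕ) (S : Multiset (ℕ × ℕ)) : Prop :=
  ∀ C : List (ℕ × ℕ), IsVChain d v C → (∀ β ∈ C, β ∈ S) → leI (wC d v C) w

/-- `x` dominates a monomial `S` in `N(v)` (in the sense of the Grassmannian case):
`x ≥ w_L` for every strictly decreasing chain `L` contained in `S`. -/
def Dominates (d : ℕ) (v x : Finset ℕ) (S : Multiset (ℕ × ℕ)) : Prop :=
  ∀ L : List (ℕ × ℕ), L.Chain' pgt → (∀ β ∈ L, β ∈ S) → leI (toW v L.toFinset) x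

/-- The `v`-degree of `θ`: half the cardinality of `v \ θ`. -/
def vdeg (v θ : Finset ℕ) : ℕ := (v \ θ).card / 2

/-- the element next to `α` in the list `C`. -/
def nextInC (C : List (ℕ × ℕ)) (α : ℕ × ℕ) : Option (ℕ × ℕ) :=
  C[C.idxOf α + 1]?

/-- The critical element of a `v`-chain: its first element whose horizontal projection
does not belong to `N(v)` (i.e. with `r ≤ r*`). -/
def critical (d : ℕ) (C : List (ℕ × ℕ)) : Option (ℕ × ℕ) :=
  C.find? (fun x => decide (x.1 ≤ star d x.1))

/-- `α` is the last element of its connected component in `C`. -/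
def isCompLast (d : ℕ) (C : List (ℕ × ℕ)) (α : ℕ × ℕ) : Prop :=
  ∃ g ∈ components d C, g.getLast? = some α

/-- The condition (*): `α` has type H in `C` and `p_h(α) ≯ β'` for some `β' ∈ 𝔖_{C,β}`. -/
def starCond (d : ℕ) (C : List (ℕ × ℕ)) (α β : ℕ × ℕ) : Prop :=
  typeOf d C α = VType.H ∧ ∃ β' ∈ SCa d C β, ¬ pgt (ph d α) β'

/-- A standard monomial in `I(d)`: a weakly decreasing sequence of elements of `I(d)`. -/
def IsStdMon (d : ℕ) (L : List (Finset ℕ)) : Prop :=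
  (∀ θ ∈ L, θ ∈ Iset d) ∧ L.Chain' (fun a b => leI b a)

/-- A standard monomial is `w`-dominated if `w ≥ θ₁`. -/
def WDominated (w : Finset ℕ) (L : List (Finset ℕ)) : Prop :=
  ∀ θ, L.head? = some θ → leI θ w

/-- A standard monomial is `v`-compatible if each member is comparable with `v`
and distinct from `v`. -/
def VCompatible (v : Finset ℕ) (L : List (Finset ℕ)) : Prop :=
  ∀ θ ∈ L, θ ≠ v ∧ (leI θ v ∨ leI v θ)

/-- The degree of a standard monomial: the sum of the `v`-degrees of its members. -/
def stdDeg (v : Finset ℕ) (L : List (Finset ℕ)) : ℕ :=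
  (L.map (fun θ => vdeg v θ)).sum

end OG

namespace OGAux
open OG

/-! ### Basic facts about `pgt` -/

theorem pgt_trans : Transitive pgt := fun _ _ _ h1 h2 =>
  ⟨lt_trans h2.1 h1.1, lt_trans h1.2 h2.2⟩

instance : IsTrans (ℕ × ℕ) pgt := ⟨fun _ _ _ h1 h2 => pgt_trans h1 h2⟩

theorem nodup_of_chain' {L : List (ℕ × ℕ)} (h : L.Chain' pgt) : L.Nodup :=
  (List.isChain_iff_pairwise.mp h).imp (fun {a b} hab => by
    rintro rfl; exact absurd hab.1 (lt_irrefl _))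

theorem chainIn_length_le {T : Multiset (ℕ × ℕ)} {L : List (ℕ × ℕ)} (h : IsChainIn T L) :
    L.length ≤ T.toFinset.card := by
  have hnd := nodup_of_chain' h.1
  rw [← List.toFinset_card_of_nodup hnd]
  exact Finset.card_le_card (fun x hx => by
    rw [List.mem_toFinset] at hx
    rw [Multiset.mem_toFinset]
    exact h.2 x hx)

theorem depth_le_card (T : Multiset (ℕ × ℕ)) (q : ℕ × ℕ) : depth T q ≤ T.toFinset.card := by
  unfold depth
  apply csSup_le'
  rintro k ⟨L, hL, -, rfl⟩
  exact chainIn_length_le hL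

theorem le_depth {T : Multiset (ℕ × ℕ)} {q : ℕ × ℕ} {k : ℕ}
    (h : ∃ L, IsChainIn T L ∧ L.getLast? = some q ∧ L.length = k) : k ≤ depth T q := by
  unfold depth
  apply le_csSup
  · exact ⟨T.toFinset.card, by rintro m ⟨L, hL, -, rfl⟩; exact chainIn_length_le hL⟩
  · exact h

theorem onFacts {d : ℕ} {v : Finset ℕ} {p : ℕ × ℕ} (h : inON d v p) :
    1 ≤ p.1 ∧ p.1 ≤ 2 * d ∧ 1 ≤ p.2 ∧ p.2 ≤ 2 * d ∧ p.2 < p.1 ∧ p.1 < 2 * d + 1 - p.2 := by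
  obtain ⟨⟨h1, h2, h3, h4, _, _, h7⟩, ⟨_, _, _, _, _, _, h8⟩⟩ := h
  exact ⟨h1, h2, h3, h4, h7, h8⟩

/-! ### typeOf extraction lemmas -/

theorem typeOf_S_not_lt {d : ℕ} {D : List (ℕ × ℕ)} {α : ℕ × ℕ}
    (h : typeOf d D α = VType.S) : ¬ star d α.1 < α.1 := by
  unfold typeOf at h
  split at h
  · split at h
    · split at h
      · exact VType.noConfusion h
      · assumption
    · exact VType.noConfusion h
  · exact VType.noConfusion h

theorem typeOf_H_lt {d : ℕ} {D : List (ℕ × ℕ)} {α : ℕ × ℕ}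
    (h : typeOf d D α = VType.H) : star d α.1 < α.1 := by
  unfold typeOf at h
  split at h
  · split at h
    · split at h
      · assumption
      · exact VType.noConfusion h
    · exact VType.noConfusion h
  · exact VType.noConfusion h

theorem qCa_S {d : ℕ} {D : List (ℕ × ℕ)} {α : ℕ × ℕ} (h : typeOf d D α = VType.S) :
    qCa d D α = α := by
  unfold qCa; rw [h]

theorem qCa_V {d : ℕ} {D : List (ℕ × ℕ)} {α : ℕ × ℕ} (h : typeOf d D α = VType.V) :
    qCa d D α = pv d α := by
  unfold qCa; rw [h]

theorem qCa_H {d : ℕ} {D : List (ℕ × ℕ)} {α : ℕ × ℕ} (h : typeOf d D α = VType.H) :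
    qCa d D α = pv d α := by
  unfold qCa; rw [h]

theorem qCa_mem_SCa {d : ℕ} {D : List (ℕ × ℕ)} {α : ℕ × ℕ} :
    qCa d D α ∈ SCa d D α := by
  unfold qCa SCa
  cases typeOf d D α <;> simp

theorem mem_SC {d : ℕ} {D : List (ℕ × ℕ)} {β x : ℕ × ℕ} (hβ : β ∈ D)
    (hx : x ∈ SCa d D β) : x ∈ SC d D := by
  unfold SC
  obtain ⟨l₁, l₂, hD⟩ := List.append_of_mem hβ
  subst hD
  rw [List.map_append, List.map_cons, List.sum_append, List.sum_cons]
  simp only [Multiset.mem_add]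
  exact Or.inr (Or.inl hx)

theorem card_SCa_le {d : ℕ} {D : List (ℕ × ℕ)} (β : ℕ × ℕ) :
    Multiset.card (SCa d D β) ≤ 2 := by
  unfold SCa
  cases typeOf d D β <;> simp

theorem card_listsum_le {X : Type*} (f : (ℕ × ℕ) → Multiset X) (hf : ∀ x, Multiset.card (f x) ≤ 2) :
    ∀ l : List (ℕ × ℕ), Multiset.card (l.map f).sum ≤ 2 * l.length
  | [] => by simp
  | a :: l => by
    rw [List.map_cons, List.sum_cons, Multiset.card_add, List.length_cons]
    have := card_listsum_le f hf l
    have := hf a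
    omega

theorem odepthC_le {d : ℕ} {v : Finset ℕ} {S : Multiset (ℕ × ℕ)} {C : List (ℕ × ℕ)} (α : ℕ × ℕ)
    (hC : IsVChain d v C) (hsub : ∀ β ∈ C, β ∈ S) :
    odepthC d C α ≤ 2 * S.toFinset.card := by
  unfold odepthC
  refine le_trans (depth_le_card _ _) (le_trans (Multiset.toFinset_card_le _) ?_)
  have h1 : Multiset.card (SC d C) ≤ 2 * C.length := by
    unfold SC
    exact card_listsum_le _ (fun x => card_SCa_le x) C
  have h2 : C.length ≤ S.toFinset.card := chainIn_length_le ⟨hC.1, hsub⟩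
  omega

/-! ### splitBy component lemmas -/

theorem find?_eq_of_mem {X : Type*} (p : X → List X → Bool)
    (hp : ∀ a g, p a g = true ↔ a ∈ g) :
    ∀ (gs : List (List X)), gs.flatten.Nodup →
      ∀ g ∈ gs, ∀ a ∈ g, gs.find? (fun g' => p a g') = some g := by
  intro gs
  induction gs with
  | nil => simp
  | cons g₀ gs ih =>
    intro hnd g hg a ha
    rw [List.flatten_cons, List.nodup_append] at hnd
    by_cases h0 : a ∈ g₀
    · have hgeq : g = g₀ := by
        rcases List.mem_cons.mp hg with rfl | hg'
        · rfl
        · exact absurd (List.mem_flatten.mpr ⟨g, hg', ha⟩) (fun hc => hnd.2.2 a h0 a hc rfl)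
      subst hgeq
      rw [List.find?_cons_of_pos (by rw [hp]; exact h0)]
    · have hg' : g ∈ gs := by
        rcases List.mem_cons.mp hg with rfl | h
        · exact absurd ha h0
        · exact h
      rw [List.find?_cons_of_neg (by rw [hp]; exact h0)]
      exact ih hnd.2.1 g hg' a ha

theorem nodup_append_cons_inj {X : Type*} {a : X} :
    ∀ {p : List X} {q u w : List X}, (p ++ a :: q).Nodup → p ++ a :: q = u ++ a :: w →
      p = u ∧ q = w := by
  intro p
  induction p with
  | nil =>
    intro q u w hnd h
    cases u with
    | nil => simpa using h
    | cons b u' =>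
      exfalso
      simp only [List.nil_append, List.cons_append, List.cons.injEq] at h
      obtain ⟨rfl, h2⟩ := h
      have : a ∈ u' ++ a :: w := by simp
      rw [← h2] at this
      simp only [List.nil_append, List.nodup_cons] at hnd
      exact hnd.1 this
  | cons b p' ih =>
    intro q u w hnd h
    cases u with
    | nil =>
      exfalso
      simp only [List.cons_append, List.nil_append, List.cons.injEq] at h
      obtain ⟨rfl, h2⟩ := h
      simp only [List.cons_append, List.nodup_cons] at hnd
      exact hnd.1 (by simp)
    | cons c u' =>
      simp only [List.cons_append, List.cons.injEq] at h
      obtain ⟨rfl, h2⟩ := h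
      simp only [List.cons_append, List.nodup_cons] at hnd
      obtain ⟨h3, h4⟩ := ih hnd.2 h2
      exact ⟨by rw [h3], h4⟩

theorem comp_singleton {d : ℕ} {D p q : List (ℕ × ℕ)} {γ : ℕ × ℕ} (hD : D = p ++ γ :: q)
    (hnd : D.Nodup)
    (h1 : ∀ δ, p.getLast? = some δ → ¬ Connected d δ γ)
    (h2 : ∀ ε, q.head? = some ε → ¬ Connected d γ ε) :
    (components d D).find? (fun g => decide (γ ∈ g)) = some [γ] := by
  have hγD : γ ∈ D := by rw [hD]; simp
  have hfl : (components d D).flatten = D := List.flatten_splitBy _ _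
  obtain ⟨g, hg, hγg⟩ := List.mem_flatten.mp (by rw [hfl]; exact hγD)
  obtain ⟨p', q', hgeq⟩ := List.append_of_mem hγg
  have hinf : g <:+: D := by
    rw [← hfl]
    exact List.infix_of_mem_flatten hg
  have hchain := List.isChain_of_mem_splitBy hg
  have hq' : q' = [] := by
    cases q' with
    | nil => rfl
    | cons ε q'' =>
      exfalso
      have hconn : Connected d γ ε := by
        rw [hgeq] at hchain
        have := (List.isChain_append_cons_cons.mp hchain).2.1
        exact of_decide_eq_true this
      obtain ⟨u, w, huw⟩ := hinf
      have hD2 : p ++ γ :: q = (u ++ p') ++ γ :: (ε :: (q'' ++ w)) := by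
        rw [← hD, ← huw, hgeq]; simp
      have hsplit := nodup_append_cons_inj (by rw [← hD]; exact hnd) hD2
      exact h2 ε (by rw [hsplit.2]; rfl) hconn
  subst hq'
  have hp' : p' = [] := by
    rcases p'.eq_nil_or_concat with rfl | ⟨p'', δ, hp''⟩
    · rfl
    · exfalso
      rw [List.concat_eq_append] at hp''
      have hconn : Connected d δ γ := by
        rw [hgeq, hp''] at hchain
        have hch2 : List.Chain' (fun a b => decide (Connected d a b) = true)
            (p'' ++ δ :: γ :: []) := by change List.IsChain _ _; simpa using hchain
        have := (List.isChain_append_cons_cons.mp hch2).2.1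
        exact of_decide_eq_true this
      obtain ⟨u, w, huw⟩ := hinf
      have hD2 : p ++ γ :: q = ((u ++ p'') ++ [δ]) ++ γ :: w := by
        rw [← hD, ← huw, hgeq, hp'']; simp
      have hsplit := nodup_append_cons_inj (by rw [← hD]; exact hnd) hD2
      refine h1 δ ?_ hconn
      rw [hsplit.1, List.getLast?_concat]
  subst hp'
  simp only [List.nil_append] at hgeq
  subst hgeq
  exact find?_eq_of_mem (fun a g' => decide (a ∈ g')) (fun a g => by simp) _ (by rw [hfl]; exact hnd) _ hg _ hγg

theorem typeOf_of_single {d : ℕ} {D : List (ℕ × ℕ)} {γ : ℕ × ℕ}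
    (hfind : (components d D).find? (fun g => decide (γ ∈ g)) = some [γ])
    (hns : ¬ star d γ.1 < γ.1) : typeOf d D γ = VType.S := by
  unfold typeOf
  simp only [hfind]
  rw [if_pos ⟨rfl, odd_one⟩, if_neg hns]

end OGAux

namespace OGAux
open OG

theorem succ_S {d : ℕ} {v : Finset ℕ} {D l₁ l₂ : List (ℕ × ℕ)} {β γ : ℕ × ℕ}
    (hD : D = l₁ ++ β :: γ :: l₂)
    (hchain : D.Chain' pgt) (hON : ∀ x ∈ D, inON d v x)
    (hS : typeOf d D β = VType.S) : typeOf d D γ = VType.S := by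
  have hnd : D.Nodup := nodup_of_chain' hchain
  have hβf := onFacts (hON β (by rw [hD]; simp))
  have hγf := onFacts (hON γ (by rw [hD]; simp))
  have hch2 : List.Chain' pgt (l₁ ++ β :: γ :: l₂) := by rw [← hD]; exact hchain
  have hβγ : pgt β γ := (List.isChain_append_cons_cons.mp hch2).2.1
  have hns : ¬ star d β.1 < β.1 := typeOf_S_not_lt hS
  simp only [OG.star] at hns
  obtain ⟨hβγ1, hβγ2⟩ := hβγ
  refine typeOf_of_single (comp_singleton (p := l₁ ++ [β]) (q := l₂)
    (by rw [hD]; simp) hnd ?_ ?_) ?_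
  · intro δ hδ
    rw [List.getLast?_concat] at hδ
    obtain rfl : β = δ := by injection hδ
    rintro ⟨-, hc⟩
    simp only [OG.star] at hc
    omega
  · intro ε hε
    cases l₂ with
    | nil => simp at hε
    | cons ε' l₂' =>
      obtain rfl : ε' = ε := by injection hε
      have hch3 : List.Chain' pgt (γ :: ε' :: l₂') :=
        (List.isChain_append_cons_cons.mp hch2).2.2
      obtain ⟨hγε1, hγε2⟩ := (List.isChain_cons_cons.mp hch3).1
      rintro ⟨-, hc⟩
      simp only [OG.star] at hc
      omega
  · show ¬ star d γ.1 < γ.1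
    simp only [OG.star]
    omega

theorem qCa_pgt {d : ℕ} {v : Finset ℕ} {D : List (ℕ × ℕ)}
    (hch : D.Chain' pgt) (hON : ∀ x ∈ D, inON d v x)
    {i : ℕ} (hi : i + 1 < D.length) :
    pgt (qCa d D D[i]) (qCa d D (D[i + 1]'hi)) := by
  have hi0 : i < D.length := by omega
  have hdec : D = D.take i ++ D[i] :: (D[i + 1]'hi) :: D.drop (i + 1 + 1) := by
    conv_lhs => rw [← List.take_append_drop i D, List.drop_eq_getElem_cons hi0,
      List.drop_eq_getElem_cons hi]
  have hβf := onFacts (hON _ (List.getElem_mem hi0))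
  have hγf := onFacts (hON _ (List.getElem_mem hi))
  have hch2 : List.Chain' pgt
      (D.take i ++ D[i] :: (D[i + 1]'hi) :: D.drop (i + 1 + 1)) := by
    rw [← hdec]; exact hch
  have hβγ := (List.isChain_append_cons_cons.mp hch2).2.1
  obtain ⟨h1, h2⟩ := hβγ
  cases hb : typeOf d D D[i] with
  | S =>
    have hgS : typeOf d D (D[i + 1]'hi) = VType.S := succ_S hdec hch hON hb
    rw [qCa_S hb, qCa_S hgS]
    exact ⟨h1, h2⟩
  | V =>
    rw [qCa_V hb]
    cases hg : typeOf d D (D[i + 1]'hi) with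
    | S =>
      rw [qCa_S hg]
      refine ⟨?_, h2⟩
      show (D[i + 1]'hi).1 < OG.star d D[i].2
      simp only [OG.star]; omega
    | V =>
      rw [qCa_V hg]
      refine ⟨?_, h2⟩
      show OG.star d (D[i + 1]'hi).2 < OG.star d D[i].2
      simp only [OG.star]; omega
    | H =>
      rw [qCa_H hg]
      refine ⟨?_, h2⟩
      show OG.star d (D[i + 1]'hi).2 < OG.star d D[i].2
      simp only [OG.star]; omega
  | H =>
    rw [qCa_H hb]
    cases hg : typeOf d D (D[i + 1]'hi) with
    | S =>
      rw [qCa_S hg]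
      refine ⟨?_, h2⟩
      show (D[i + 1]'hi).1 < OG.star d D[i].2
      simp only [OG.star]; omega
    | V =>
      rw [qCa_V hg]
      refine ⟨?_, h2⟩
      show OG.star d (D[i + 1]'hi).2 < OG.star d D[i].2
      simp only [OG.star]; omega
    | H =>
      rw [qCa_H hg]
      refine ⟨?_, h2⟩
      show OG.star d (D[i + 1]'hi).2 < OG.star d D[i].2
      simp only [OG.star]; omega

theorem greedy_chain {d : ℕ} {v : Finset ℕ} {D : List (ℕ × ℕ)}
    (hch : D.Chain' pgt) (hON : ∀ x ∈ D, inON d v x) :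
    (D.map (qCa d D)).Chain' pgt := by
  change List.IsChain _ _
  rw [List.isChain_iff_getElem]
  intro i h
  simp only [List.length_map] at h
  simp only [List.get_eq_getElem, List.getElem_map]
  exact qCa_pgt hch hON (by omega)

/-! ### the reflection of the chain in `𝔖 ∪ 𝔖^#` into `𝔖` -/

def reflv (d : ℕ) (g : ℕ × ℕ) : ℕ × ℕ :=
  if 2 * d < g.1 + g.2 then (2 * d + 1 - g.2, 2 * d + 1 - g.1) else g

theorem refl_spec {d : ℕ} {v : Finset ℕ} {S : Multiset (ℕ × ℕ)} (hS : ∀ a ∈ S, inON d v a)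
    {g : ℕ × ℕ} (hg : g ∈ S + S.map (hash d)) :
    ∃ b, b ∈ S ∧ reflv d g = b ∧
      ((g.1 = b.1 ∧ g.2 = b.2) ∨ (g.1 = 2 * d + 1 - b.2 ∧ g.2 = 2 * d + 1 - b.1)) := by
  rcases Multiset.mem_add.mp hg with h | h
  · have hf := onFacts (hS g h)
    refine ⟨g, h, ?_, Or.inl ⟨rfl, rfl⟩⟩
    unfold reflv
    rw [if_neg (by omega)]
  · obtain ⟨b, hb, heq⟩ := Multiset.mem_map.mp h
    have hf := onFacts (hS b hb)
    have e1 : g.1 = 2 * d + 1 - b.2 := by rw [← heq]; rfl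
    have e2 : g.2 = 2 * d + 1 - b.1 := by rw [← heq]; rfl
    refine ⟨b, hb, ?_, Or.inr ⟨e1, e2⟩⟩
    unfold reflv
    rw [if_pos (by omega)]
    refine Prod.ext ?_ ?_
    · show 2 * d + 1 - g.2 = b.1
      omega
    · show 2 * d + 1 - g.1 = b.2
      omega

theorem refl_pgt {d : ℕ} {v : Finset ℕ} {S : Multiset (ℕ × ℕ)} (hS : ∀ a ∈ S, inON d v a)
    {g h : ℕ × ℕ} (hg : g ∈ S + S.map (hash d)) (hh : h ∈ S + S.map (hash d))
    (hgh : pgt g h) : pgt (reflv d g) (reflv d h) := by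
  obtain ⟨b, hbS, hrb, hgb⟩ := refl_spec hS hg
  obtain ⟨c, hcS, hrc, hhc⟩ := refl_spec hS hh
  have fb := onFacts (hS b hbS)
  have fc := onFacts (hS c hcS)
  rw [hrb, hrc]
  obtain ⟨hgh1, hgh2⟩ := hgh
  rcases hgb with ⟨e1, e2⟩ | ⟨e1, e2⟩ <;> rcases hhc with ⟨f1, f2⟩ | ⟨f1, f2⟩ <;>
    exact ⟨by omega, by omega⟩

theorem refl_chain {d : ℕ} {v : Finset ℕ} {S : Multiset (ℕ × ℕ)} (hS : ∀ a ∈ S, inON d v a)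
    {L : List (ℕ × ℕ)} (hch : L.Chain' pgt) (hmem : ∀ g ∈ L, g ∈ S + S.map (hash d)) :
    (L.map (reflv d)).Chain' pgt := by
  change List.IsChain _ _ at hch ⊢
  rw [List.isChain_iff_getElem] at hch ⊢
  intro i h
  simp only [List.length_map] at h
  simp only [List.get_eq_getElem, List.getElem_map]
  have h1 : i < L.length := by omega
  have h2 : i + 1 < L.length := by omega
  refine refl_pgt hS (hmem _ (List.getElem_mem h1)) (hmem _ (List.getElem_mem h2)) ?_
  have := hch i (by omega)
  simpa using this

end OGAux


open OG in
/-- the o-depth of `α` in a monomial `𝔖` of `ON(v)` is at least the depth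
of `α` in the monomial `𝔖 ∪ 𝔖^#` of `N(v)`. -/
theorem stmt10 (d : ℕ) (hd : 0 < d) (v : Finset ℕ) (hv : v ∈ Iset d)
    (S : Multiset (ℕ × ℕ)) (hS : ∀ α ∈ S, inON d v α) (α : ℕ × ℕ) (hα : α ∈ S) :
    depth (S + S.map (hash d)) α ≤ odepthM d v S α := by
  unfold depth
  apply csSup_le'
  rintro k ⟨L, hL, hlast, rfl⟩
  set D := L.map (OGAux.reflv d) with hDdef
  have hDchain : D.Chain' pgt := OGAux.refl_chain hS hL.1 hL.2
  have hDmem : ∀ x ∈ D, x ∈ S := by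
    intro x hx
    obtain ⟨g, hg, rfl⟩ := List.mem_map.mp hx
    obtain ⟨b, hbS, hrb, -⟩ := OGAux.refl_spec hS (hL.2 g hg)
    rw [hrb]; exact hbS
  have hDON : ∀ x ∈ D, inON d v x := fun x hx => hS x (hDmem x hx)
  have hαf := OGAux.onFacts (hS α hα)
  have hreflα : OGAux.reflv d α = α := by unfold OGAux.reflv; rw [if_neg (by omega)]
  have hDlast : D.getLast? = some α := by
    rw [hDdef, List.getLast?_map, hlast]
    simp [hreflα]
  have hαD : α ∈ D := List.mem_of_getLast? hDlast
  have hq : L.length ≤ odepthC d D α := by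
    unfold odepthC
    apply OGAux.le_depth
    refine ⟨D.map (qCa d D), ⟨OGAux.greedy_chain hDchain hDON, ?_⟩, ?_, ?_⟩
    · intro x hx
      obtain ⟨b, hb, rfl⟩ := List.mem_map.mp hx
      exact OGAux.mem_SC hb OGAux.qCa_mem_SCa
    · rw [List.getLast?_map, hDlast]
      rfl
    · simp [hDdef]
  refine le_trans hq ?_
  unfold odepthM
  apply le_csSup
  · refine ⟨2 * S.toFinset.card, ?_⟩
    rintro m ⟨C, hC, hCS, hαC, rfl⟩
    exact OGAux.odepthC_le α hC hCS
  · exact ⟨D, ⟨hDchain, hDON⟩, hDmem, hαD, rfl⟩
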